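/- arXiv:1705.01193 — 2 statements merged into one kernel-verified Lean document; each statement's English description precedes it below -/
import Mathlib

section
/- For each f ∈ L¹(Ω,μ), the boundary extension of f is unique up to sets of μ-measure zero: if f̃₁ and f̃₂ are both boundary extensions of f, then f̃₁ = f̃₂ μ-almost everywhere on Ω̃. -/
open MeasureTheory Set Filter Topology

/-- The measure `ℓ(·,v)` on `V` given by
`ℓ(dw,v) = p w v⁻¹ k(w,v) ν(dw) + q δ_v(dw)`. -/
noncomputable def ell (p q : ℝ) (k : ℝ → ℝ → ℝ) (ν : Measure ℝ) (V : Set ℝ) (v : ℝ) :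
    Measure ℝ :=
  (ν.restrict V).withDensity (fun w => ENNReal.ofReal (p * w * v⁻¹ * k w v)) +
    (ENNReal.ofReal q) • Measure.dirac v

/-- The sets `Ω₀ = Ω = (0,1) × V` and, for `i ≥ 1`,
`Ω_i = {(x,v) : v ∈ V, −i v b⁻¹ < x ≤ −(i−1) v b⁻¹}`. -/
def Omi (b : ℝ) (V : Set ℝ) : ℕ → Set (ℝ × ℝ)
  | 0 => (Set.Ioo (0 : ℝ) 1) ×ˢ V
  | (i + 1) =>
      {z : ℝ × ℝ | z.2 ∈ V ∧ -(((i : ℝ) + 1) * z.2 * b⁻¹) < z.1 ∧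
        z.1 ≤ -((i : ℝ) * z.2 * b⁻¹)}

/-- `Γ_j = ⋃_{i=0}^{j} Ω_i`. -/
def Gam (b : ℝ) (V : Set ℝ) (j : ℕ) : Set (ℝ × ℝ) :=
  ⋃ i ∈ Finset.range (j + 1), Omi b V i

/-- A measurable function `f̃ : Ω̃ → ℝ` (modelled on all of `ℝ × ℝ`, with
`Ω̃ = (−∞,1) × V`), μ-integrable on each `Γ_j`, is a boundary extension of `f` if
`f̃ = f` a.e. on `{x > 0}` and, a.e. on `{x ≤ 0}`, the function
`w ↦ f̃(1 + x w v⁻¹, w)` is `ℓ(·,v)`-integrable with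
`f̃(x,v) = ∫_V f̃(1 + x w v⁻¹, w) ℓ(dw,v)`. -/
def IsBoundaryExtension (b p q : ℝ) (k : ℝ → ℝ → ℝ) (ν : Measure ℝ) (V : Set ℝ)
    (f ftil : ℝ × ℝ → ℝ) : Prop :=
  Measurable ftil ∧
  (∀ j : ℕ, IntegrableOn ftil (Gam b V j) ((volume : Measure ℝ).prod ν)) ∧
  (∀ᵐ z ∂(((volume : Measure ℝ).prod ν).restrict ((Set.Iio (1 : ℝ)) ×ˢ V)),
    0 < z.1 → ftil z = f z) ∧
  (∀ᵐ z ∂(((volume : Measure ℝ).prod ν).restrict ((Set.Iio (1 : ℝ)) ×ˢ V)),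
    z.1 ≤ 0 →
      Integrable (fun w => ftil (1 + z.1 * w * z.2⁻¹, w)) (ell p q k ν V z.2) ∧
      ftil z = ∫ w, ftil (1 + z.1 * w * z.2⁻¹, w) ∂(ell p q k ν V z.2))

/-! ### auxiliary lemmas -/


lemma iff_lt' {y c w b : ℝ} (hb : 0 < b) (hw : 0 < w) :
    -(c * w * b⁻¹) < y ↔ -y * b * w⁻¹ < c := by
  rw [show -(c * w * b⁻¹) = -(c * w) / b by ring, show -y * b * w⁻¹ = -(y * b) / w by ring,
    div_lt_iff₀ hb, div_lt_iff₀ hw]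
  constructor <;> intro h <;> nlinarith

lemma iff_le' {y c w b : ℝ} (hb : 0 < b) (hw : 0 < w) :
    y ≤ -(c * w * b⁻¹) ↔ c ≤ -y * b * w⁻¹ := by
  rw [show -(c * w * b⁻¹) = -(c * w) / b by ring, show -y * b * w⁻¹ = -(y * b) / w by ring,
    le_div_iff₀ hb, le_div_iff₀ hw]
  constructor <;> intro h <;> nlinarith

lemma mem_Gam {b : ℝ} {V : Set ℝ} {w y : ℝ} (hw0 : 0 < w) (hwb : w < b) (hwV : w ∈ V)
    {i : ℕ} (hy1 : y < 1) (hy2 : -((i : ℝ) * w * b⁻¹) < y) : (y, w) ∈ Gam b V i := by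
  have hb : 0 < b := hw0.trans hwb
  rcases lt_or_ge 0 y with hy0 | hy0
  · exact Set.mem_iUnion₂.mpr ⟨0, Finset.mem_range.mpr (Nat.succ_pos i), ⟨⟨hy0, hy1⟩, hwV⟩⟩
  · have ht0 : 0 ≤ -y * b * w⁻¹ :=
      mul_nonneg (mul_nonneg (by linarith) hb.le) (inv_nonneg.mpr hw0.le)
    have hti : -y * b * w⁻¹ < (i : ℝ) := (iff_lt' hb hw0).mp hy2
    have hi0 : ⌊-y * b * w⁻¹⌋₊ < i := (Nat.floor_lt ht0).mpr hti
    refine Set.mem_iUnion₂.mpr ⟨⌊-y * b * w⁻¹⌋₊ + 1, Finset.mem_range.mpr (by omega), ?_⟩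
    refine ⟨hwV, ?_, ?_⟩
    · exact (iff_lt' hb hw0).mpr (Nat.lt_floor_add_one _)
    · exact (iff_le' hb hw0).mpr (Nat.floor_le ht0)

lemma step_geom {b v w x : ℝ} {i : ℕ} (hb : 0 < b) (hv0 : 0 < v) (hw0 : 0 < w) (hwb : w < b)
    (hxlt : x < 0) (hlow : -(((i : ℝ) + 1) * v * b⁻¹) < x) :
    1 + x * w * v⁻¹ < 1 ∧ -((i : ℝ) * w * b⁻¹) < 1 + x * w * v⁻¹ := by
  have hvi : 0 < v⁻¹ := inv_pos.mpr hv0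
  have hwv : 0 < w * v⁻¹ := mul_pos hw0 hvi
  have hvne : v ≠ 0 := hv0.ne'
  constructor
  · have h := mul_neg_of_neg_of_pos hxlt hwv
    nlinarith
  · have h4 : -(((i : ℝ) + 1) * w * b⁻¹) < x * w * v⁻¹ := by
      have h := mul_lt_mul_of_pos_right hlow hwv
      calc -(((i : ℝ) + 1) * w * b⁻¹) = -(((i : ℝ) + 1) * v * b⁻¹) * (w * v⁻¹) := by
            field_simp
        _ < x * (w * v⁻¹) := h
        _ = x * w * v⁻¹ := by ring
    have h5 : w * b⁻¹ < 1 := by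
      rw [show w * b⁻¹ = w / b by ring]; exact (div_lt_one hb).mpr hwb
    linarith

lemma Omi_meas {b : ℝ} {V : Set ℝ} (hVm : MeasurableSet V) (i : ℕ) :
    MeasurableSet (Omi b V i) := by
  cases i with
  | zero => exact measurableSet_Ioo.prod hVm
  | succ i =>
    have : Omi b V (i + 1) = {z : ℝ × ℝ | z.2 ∈ V} ∩
        ({z : ℝ × ℝ | -(((i : ℝ) + 1) * z.2 * b⁻¹) < z.1} ∩
         {z : ℝ × ℝ | z.1 ≤ -((i : ℝ) * z.2 * b⁻¹)}) := by
      ext z; simp [Omi, and_assoc]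
    rw [this]
    exact (hVm.preimage measurable_snd).inter
      ((measurableSet_lt (by fun_prop) (by fun_prop)).inter
        (measurableSet_le (by fun_prop) (by fun_prop)))

lemma Gam_meas {b : ℝ} {V : Set ℝ} (hVm : MeasurableSet V) (j : ℕ) :
    MeasurableSet (Gam b V j) :=
  (Finset.range (j + 1)).measurableSet_biUnion (fun i _ => Omi_meas hVm i)

lemma Gam_succ (b : ℝ) (V : Set ℝ) (i : ℕ) :
    Gam b V (i + 1) = Omi b V (i + 1) ∪ Gam b V i := by
  ext z
  simp only [Gam, Set.mem_iUnion, Finset.mem_range, Set.mem_union]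
  constructor
  · rintro ⟨j, hj, hz⟩
    rcases Nat.lt_or_ge j (i + 1) with h | h
    · exact Or.inr ⟨j, h, hz⟩
    · have : j = i + 1 := by omega
      exact Or.inl (this ▸ hz)
  · rintro (hz | ⟨j, hj, hz⟩)
    · exact ⟨i + 1, by omega, hz⟩
    · exact ⟨j, by omega, hz⟩

lemma slice_null {ν : Measure ℝ} [SigmaFinite ν] {N' : Set (ℝ × ℝ)} (hm : MeasurableSet N')
    (h0 : (volume : Measure ℝ).prod ν N' = 0) :
    ∀ᵐ w ∂ν, (volume : Measure ℝ) {x | (x, w) ∈ N'} = 0 := by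
  have hswap : (ν.prod (volume : Measure ℝ)) (Prod.swap ⁻¹' N') = 0 := by
    rw [← Measure.prod_swap, Measure.map_apply measurable_swap (hm.preimage measurable_swap)]
    have : Prod.swap ⁻¹' (Prod.swap ⁻¹' N') = N' := by ext z; simp
    rw [this]; exact h0
  have h1 := Measure.measure_ae_null_of_prod_null hswap
  filter_upwards [h1] with w hw
  have hset : Prod.mk w ⁻¹' (Prod.swap ⁻¹' N') = {x | (x, w) ∈ N'} := by ext x; simp
  rw [← hset]; exact hw

lemma prod_null_of_slices {ν : Measure ℝ} [SigmaFinite ν] {S : Set (ℝ × ℝ)}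
    (hSm : MeasurableSet S)
    (h : ∀ᵐ w ∂ν, (volume : Measure ℝ) {x | (x, w) ∈ S} = 0) :
    (volume : Measure ℝ).prod ν S = 0 := by
  have h1 : (volume : Measure ℝ).prod ν S = (ν.prod (volume : Measure ℝ)) (Prod.swap ⁻¹' S) := by
    rw [← Measure.prod_swap]
    exact Measure.map_apply measurable_swap hSm
  rw [h1, Measure.measure_prod_null (hSm.preimage measurable_swap)]
  filter_upwards [h] with w hw
  have hset : Prod.mk w ⁻¹' (Prod.swap ⁻¹' S) = {x | (x, w) ∈ S} := by ext x; simp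
  simpa [hset] using hw

lemma affine_preimage_null {α : ℝ} (hα : α ≠ 0) {s : Set ℝ} (hs : (volume : Measure ℝ) s = 0) :
    (volume : Measure ℝ) {x : ℝ | 1 + x * α ∈ s} = 0 := by
  have h1 : {x : ℝ | 1 + x * α ∈ s} = (· * α) ⁻¹' ((fun y => (1 : ℝ) + y) ⁻¹' s) := by
    ext x; simp
  rw [h1, Real.volume_preimage_mul_right hα, measure_preimage_add volume 1 s, hs, mul_zero]

lemma Sv_null {ν : Measure ℝ} [SigmaFinite ν] {V : Set ℝ} (hVm : MeasurableSet V)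
    (hVpos : ∀ w ∈ V, 0 < w) {N' : Set (ℝ × ℝ)} (hm : MeasurableSet N')
    (h0 : (volume : Measure ℝ).prod ν N' = 0) {v : ℝ} (hv : 0 < v) :
    (volume : Measure ℝ).prod ν
      {zw : ℝ × ℝ | zw.2 ∈ V ∧ (1 + zw.1 * zw.2 * v⁻¹, zw.2) ∈ N'} = 0 := by
  have hSm : MeasurableSet {zw : ℝ × ℝ | zw.2 ∈ V ∧ (1 + zw.1 * zw.2 * v⁻¹, zw.2) ∈ N'} := by
    have : {zw : ℝ × ℝ | zw.2 ∈ V ∧ (1 + zw.1 * zw.2 * v⁻¹, zw.2) ∈ N'} =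
        ((fun zw : ℝ × ℝ => zw.2) ⁻¹' V) ∩
        ((fun zw : ℝ × ℝ => (1 + zw.1 * zw.2 * v⁻¹, zw.2)) ⁻¹' N') := rfl
    rw [this]
    exact (hVm.preimage measurable_snd).inter (hm.preimage (by fun_prop))
  apply prod_null_of_slices hSm
  filter_upwards [slice_null hm h0] with w hw
  by_cases hwV : w ∈ V
  · have hα : w * v⁻¹ ≠ 0 := (mul_pos (hVpos w hwV) (inv_pos.mpr hv)).ne'
    have hset : {x : ℝ | w ∈ V ∧ (1 + x * w * v⁻¹, w) ∈ N'} =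
        {x : ℝ | 1 + x * (w * v⁻¹) ∈ {x' | (x', w) ∈ N'}} := by
      ext x; simp [hwV, mul_assoc]
    rw [hset]
    exact affine_preimage_null hα hw
  · have hset : {x : ℝ | w ∈ V ∧ (1 + x * w * v⁻¹, w) ∈ N'} =
        (∅ : Set ℝ) := by ext x; simp [hwV]
    rw [hset]; simp

lemma aux_A {ν : Measure ℝ} [SigmaFinite ν] {V : Set ℝ} (hVm : MeasurableSet V)
    (hVpos : ∀ w ∈ V, 0 < w) {N' : Set (ℝ × ℝ)} (hm : MeasurableSet N')
    (h0 : (volume : Measure ℝ).prod ν N' = 0) :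
    ∀ᵐ z ∂((volume : Measure ℝ).prod ν), z.2 ∈ V →
      ∀ᵐ w ∂ν, w ∈ V → (1 + z.1 * w * z.2⁻¹, w) ∉ N' := by
  set G : Set ((ℝ × ℝ) × ℝ) :=
    {x : (ℝ × ℝ) × ℝ | x.1.2 ∈ V ∧ x.2 ∈ V ∧ (1 + x.1.1 * x.2 * x.1.2⁻¹, x.2) ∈ N'} with hG
  have hGm : MeasurableSet G := by
    have : G = ((fun x : (ℝ × ℝ) × ℝ => x.1.2) ⁻¹' V) ∩
        (((fun x : (ℝ × ℝ) × ℝ => x.2) ⁻¹' V) ∩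
         ((fun x : (ℝ × ℝ) × ℝ => (1 + x.1.1 * x.2 * x.1.2⁻¹, x.2)) ⁻¹' N')) := rfl
    rw [this]
    exact (hVm.preimage (by fun_prop)).inter
      ((hVm.preimage (by fun_prop)).inter (hm.preimage (by fun_prop)))
  have hGnull : (((volume : Measure ℝ).prod ν).prod ν) G = 0 := by
    rw [Measure.prod_apply hGm,
      lintegral_prod _ (measurable_measure_prodMk_left hGm).aemeasurable,
      lintegral_lintegral_swap (measurable_measure_prodMk_left hGm).aemeasurable]
    have hzero : ∀ v : ℝ, ∫⁻ x, ν (Prod.mk (x, v) ⁻¹' G) ∂(volume : Measure ℝ) = 0 := by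
      intro v
      by_cases hv : v ∈ V
      · have hv0 := hVpos v hv
        have hSm : MeasurableSet {zw : ℝ × ℝ | zw.2 ∈ V ∧ (1 + zw.1 * zw.2 * v⁻¹, zw.2) ∈ N'} := by
          have : {zw : ℝ × ℝ | zw.2 ∈ V ∧ (1 + zw.1 * zw.2 * v⁻¹, zw.2) ∈ N'} =
              ((fun zw : ℝ × ℝ => zw.2) ⁻¹' V) ∩
              ((fun zw : ℝ × ℝ => (1 + zw.1 * zw.2 * v⁻¹, zw.2)) ⁻¹' N') := rfl
          rw [this]
          exact (hVm.preimage measurable_snd).inter (hm.preimage (by fun_prop))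
        have hset : ∀ x : ℝ, Prod.mk (x, v) ⁻¹' G =
            Prod.mk x ⁻¹' {zw : ℝ × ℝ | zw.2 ∈ V ∧ (1 + zw.1 * zw.2 * v⁻¹, zw.2) ∈ N'} := by
          intro x; ext w; simp [hG, hv]
        calc ∫⁻ x, ν (Prod.mk (x, v) ⁻¹' G) ∂(volume : Measure ℝ)
            = ∫⁻ x, ν (Prod.mk x ⁻¹'
                {zw : ℝ × ℝ | zw.2 ∈ V ∧ (1 + zw.1 * zw.2 * v⁻¹, zw.2) ∈ N'})
                ∂(volume : Measure ℝ) := by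
              apply lintegral_congr; intro x; rw [hset x]
          _ = (volume : Measure ℝ).prod ν
                {zw : ℝ × ℝ | zw.2 ∈ V ∧ (1 + zw.1 * zw.2 * v⁻¹, zw.2) ∈ N'} :=
              (Measure.prod_apply hSm).symm
          _ = 0 := Sv_null hVm hVpos hm h0 hv0
      · have hset : ∀ x : ℝ, Prod.mk (x, v) ⁻¹' G = (∅ : Set ℝ) := by
          intro x; ext w; simp [hG, hv]
        calc ∫⁻ x, ν (Prod.mk (x, v) ⁻¹' G) ∂(volume : Measure ℝ)
            = ∫⁻ _x, (0 : ENNReal) ∂(volume : Measure ℝ) := by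
              apply lintegral_congr; intro x; rw [hset x]; simp
          _ = 0 := lintegral_zero
    calc ∫⁻ v, ∫⁻ x, ν (Prod.mk (x, v) ⁻¹' G) ∂(volume : Measure ℝ) ∂ν
        = ∫⁻ _v, (0 : ENNReal) ∂ν := by apply lintegral_congr; intro v; rw [hzero v]
      _ = 0 := lintegral_zero
  have hae := Measure.measure_ae_null_of_prod_null hGnull
  filter_upwards [hae] with z hz hzV
  have hz' : ν {w | w ∈ V ∧ (1 + z.1 * w * z.2⁻¹, w) ∈ N'} = 0 := by
    have : Prod.mk z ⁻¹' G = {w | w ∈ V ∧ (1 + z.1 * w * z.2⁻¹, w) ∈ N'} := by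
      ext w; simp [hG, hzV]
    rw [← this]; exact hz
  have h2 := measure_eq_zero_iff_ae_notMem.mp hz'
  filter_upwards [h2] with w hw hwV
  intro hmem
  exact hw ⟨hwV, hmem⟩

lemma aux_B {ν : Measure ℝ} [SigmaFinite ν] {N' : Set (ℝ × ℝ)} (hm : MeasurableSet N')
    (h0 : (volume : Measure ℝ).prod ν N' = 0) :
    ∀ᵐ z ∂((volume : Measure ℝ).prod ν), (1 + z.1, z.2) ∉ N' := by
  have hSm : MeasurableSet ((fun z : ℝ × ℝ => (1 + z.1, z.2)) ⁻¹' N') :=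
    hm.preimage (by fun_prop)
  have hnull : (volume : Measure ℝ).prod ν ((fun z : ℝ × ℝ => (1 + z.1, z.2)) ⁻¹' N') = 0 := by
    apply prod_null_of_slices hSm
    filter_upwards [slice_null hm h0] with w hw
    have hset : {x | (x, w) ∈ (fun z : ℝ × ℝ => (1 + z.1, z.2)) ⁻¹' N'} =
        (fun x : ℝ => 1 + x) ⁻¹' {x' | (x', w) ∈ N'} := by ext x; simp
    rw [hset, measure_preimage_add]
    exact hw
  have := measure_eq_zero_iff_ae_notMem.mp hnull
  filter_upwards [this] with z hz
  exact hz

theorem stmt4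
    (a b p q : ℝ) (ha : 0 ≤ a) (hab : a < b)
    (hp : 0 ≤ p) (hq : 0 ≤ q) (hpq : 0 < p + q)
    (V : Set ℝ) (hV : V ⊆ Set.Ioo a b) (hVm : MeasurableSet V)
    (ν : Measure ℝ) [SigmaFinite ν]
    (k : ℝ → ℝ → ℝ) (hkm : Measurable (Function.uncurry k))
    (hknn : ∀ w v : ℝ, 0 ≤ k w v)
    (hk1 : ∀ w ∈ V, ∫ v in V, k w v ∂ν = 1)
    (f ftil₁ ftil₂ : ℝ × ℝ → ℝ)
    (hf : IntegrableOn f ((Set.Ioo (0 : ℝ) 1) ×ˢ V) ((volume : Measure ℝ).prod ν))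
    (hext₁ : IsBoundaryExtension b p q k ν V f ftil₁)
    (hext₂ : IsBoundaryExtension b p q k ν V f ftil₂) :
    ∀ᵐ z ∂(((volume : Measure ℝ).prod ν).restrict ((Set.Iio (1 : ℝ)) ×ˢ V)),
      ftil₁ z = ftil₂ z := by
  obtain ⟨hm₁, hint₁, hbd₁, hfix₁⟩ := hext₁
  obtain ⟨hm₂, hint₂, hbd₂, hfix₂⟩ := hext₂
  have hb : 0 < b := lt_of_le_of_lt ha hab
  have hVpos : ∀ v ∈ V, 0 < v := fun v hv => lt_of_le_of_lt ha (hV hv).1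
  have hVlt : ∀ v ∈ V, v < b := fun v hv => (hV hv).2
  set μ := (volume : Measure ℝ).prod ν with hμdef
  set N := {z : ℝ × ℝ | ftil₁ z ≠ ftil₂ z} with hNdef
  have hN : MeasurableSet N := (measurableSet_eq_fun hm₁ hm₂).compl
  have hprodm : MeasurableSet ((Set.Iio (1 : ℝ)) ×ˢ V) := measurableSet_Iio.prod hVm
  -- conversion helper
  have conv : ∀ S : Set (ℝ × ℝ), MeasurableSet S → S ⊆ (Set.Iio (1 : ℝ)) ×ˢ V →
      (∀ᵐ z ∂μ.restrict ((Set.Iio (1 : ℝ)) ×ˢ V), z ∈ S → ftil₁ z = ftil₂ z) →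
      μ (N ∩ S) = 0 := by
    intro S hSm hSsub hae
    have h1 : ∀ᵐ z ∂μ, z ∈ (Set.Iio (1 : ℝ)) ×ˢ V → z ∈ S → ftil₁ z = ftil₂ z :=
      (ae_restrict_iff' hprodm).mp hae
    have h2 : ∀ᵐ z ∂μ.restrict S, ftil₁ z = ftil₂ z := by
      rw [ae_restrict_iff' hSm]
      filter_upwards [h1] with z hz hzS
      exact hz (hSsub hzS) hzS
    have h3 : μ.restrict S N = 0 := by
      rw [ae_iff] at h2
      exact h2
    rwa [Measure.restrict_apply hN] at h3
  -- key induction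
  have key : ∀ i : ℕ, μ (N ∩ Gam b V i) = 0 := by
    intro i
    induction i with
    | zero =>
      apply conv _ (Gam_meas hVm 0)
      · intro z hz
        have hz0 : z ∈ Omi b V 0 := by
          simpa [Gam] using hz
        obtain ⟨⟨h01, h02⟩, hzV⟩ := hz0
        exact ⟨h02, hzV⟩
      · filter_upwards [hbd₁, hbd₂] with z h1 h2 hzS
        have hz0 : z ∈ Omi b V 0 := by
          simpa [Gam] using hzS
        obtain ⟨⟨h01, _⟩, _⟩ := hz0
        rw [h1 h01, h2 h01]
    | succ i ih =>
      have hN'm : MeasurableSet (N ∩ Gam b V i) := hN.inter (Gam_meas hVm i)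
      have hA := aux_A hVm hVpos hN'm ih
      have hB := aux_B hN'm ih
      have hx0 : ∀ᵐ z : ℝ × ℝ ∂μ, z.1 ≠ 0 := by
        have hz0 : μ ({(0 : ℝ)} ×ˢ (Set.univ : Set ℝ)) = 0 := by
          rw [hμdef, Measure.prod_prod, Real.volume_singleton, zero_mul]
        rw [ae_iff]
        apply measure_mono_null _ hz0
        intro z hz
        simp only [Set.mem_setOf_eq, not_not] at hz
        exact ⟨hz, Set.mem_univ _⟩
      have hstep : μ (N ∩ Omi b V (i + 1)) = 0 := by
        apply conv _ (Omi_meas hVm (i + 1))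
        · rintro z ⟨hzV, _, hhigh⟩
          refine ⟨?_, hzV⟩
          have h0 : 0 ≤ (i : ℝ) * z.2 * b⁻¹ :=
            mul_nonneg (mul_nonneg (Nat.cast_nonneg i) (hVpos _ hzV).le) (inv_nonneg.mpr hb.le)
          simp only [Set.mem_Iio]
          linarith
        · filter_upwards [hfix₁, hfix₂, ae_restrict_of_ae hA, ae_restrict_of_ae hB,
            ae_restrict_of_ae hx0] with z h1 h2 hA' hB' hx0' hzmem
          obtain ⟨hzV, hzlow, hzhigh⟩ := hzmem
          have hv0 : 0 < z.2 := hVpos _ hzV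
          have hvb : z.2 < b := hVlt _ hzV
          have hnn : 0 ≤ (i : ℝ) * z.2 * b⁻¹ :=
            mul_nonneg (mul_nonneg (Nat.cast_nonneg i) hv0.le) (inv_nonneg.mpr hb.le)
          have hx_le : z.1 ≤ 0 := by linarith
          have hxlt : z.1 < 0 := lt_of_le_of_ne hx_le hx0'
          obtain ⟨hI1, hE1⟩ := h1 hx_le
          obtain ⟨hI2, hE2⟩ := h2 hx_le
          set F := fun w => ftil₁ (1 + z.1 * w * z.2⁻¹, w) - ftil₂ (1 + z.1 * w * z.2⁻¹, w)
            with hF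
          have hId : Integrable F (ell p q k ν V z.2) := hI1.sub hI2
          have hell : ell p q k ν V z.2 =
              (ν.restrict V).withDensity
                (fun w => ENNReal.ofReal (p * w * z.2⁻¹ * k w z.2)) +
              (ENNReal.ofReal q) • Measure.dirac z.2 := rfl
          rw [hell] at hId
          obtain ⟨hIa, hIb⟩ := integrable_add_measure.mp hId
          -- withDensity part vanishes
          have haeV : ∀ᵐ w ∂(ν.restrict V), F w = 0 := by
            rw [ae_restrict_iff' hVm]
            filter_upwards [hA' hzV] with w hw hwV
            have hw0 := hVpos w hwV
            have hwb := hVlt w hwV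
            have hgeo := step_geom hb hv0 hw0 hwb hxlt hzlow
            have hmem : ((1 + z.1 * w * z.2⁻¹, w) : ℝ × ℝ) ∈ Gam b V i :=
              mem_Gam hw0 hwb hwV hgeo.1 hgeo.2
            have hnotN : ((1 + z.1 * w * z.2⁻¹, w) : ℝ × ℝ) ∉ N :=
              fun hmm => (hw hwV) ⟨hmm, hmem⟩
            have heq : ftil₁ (1 + z.1 * w * z.2⁻¹, w) = ftil₂ (1 + z.1 * w * z.2⁻¹, w) :=
              not_not.mp hnotN
            simp only [hF]
            rw [heq, sub_self]
          have hwd0 : ∫ w, F w ∂((ν.restrict V).withDensity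
              (fun w => ENNReal.ofReal (p * w * z.2⁻¹ * k w z.2))) = 0 := by
            apply integral_eq_zero_of_ae
            exact haeV.filter_mono (Measure.AbsolutelyContinuous.ae_le
              (withDensity_absolutelyContinuous _ _))
          -- dirac part vanishes
          have hz1 : z.1 * z.2 * z.2⁻¹ = z.1 := by
            field_simp
          have hdr0 : ∫ w, F w ∂((ENNReal.ofReal q) • Measure.dirac z.2) = 0 := by
            rw [integral_smul_measure, integral_dirac]
            have h5 : z.2 * b⁻¹ < 1 := by
              rw [show z.2 * b⁻¹ = z.2 / b by ring]; exact (div_lt_one hb).mpr hvb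
            have hy1 : (1 : ℝ) + z.1 < 1 := by linarith
            have hy2 : -((i : ℝ) * z.2 * b⁻¹) < 1 + z.1 := by linarith
            have hmem : ((1 + z.1, z.2) : ℝ × ℝ) ∈ Gam b V i :=
              mem_Gam hv0 hvb hzV hy1 hy2
            have hnotN : ((1 + z.1, z.2) : ℝ × ℝ) ∉ N := fun hmm => hB' ⟨hmm, hmem⟩
            have heq : ftil₁ (1 + z.1, z.2) = ftil₂ (1 + z.1, z.2) := not_not.mp hnotN
            have hFv : F z.2 = 0 := by
              simp only [hF]
              rw [hz1, heq, sub_self]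
            rw [hFv, smul_zero]
          have hsub0 : ftil₁ z - ftil₂ z = 0 := by
            rw [hE1, hE2, ← integral_sub hI1 hI2]
            have : (fun w => ftil₁ (1 + z.1 * w * z.2⁻¹, w) - ftil₂ (1 + z.1 * w * z.2⁻¹, w)) =
                F := rfl
            rw [this, hell, integral_add_measure hIa hIb, hwd0, hdr0, add_zero]
          linarith
      have hsub : N ∩ Gam b V (i + 1) ⊆ (N ∩ Gam b V i) ∪ (N ∩ Omi b V (i + 1)) := by
        rw [Gam_succ]
        rintro z ⟨hzN, hz⟩
        rcases hz with hz | hz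
        · exact Or.inr ⟨hzN, hz⟩
        · exact Or.inl ⟨hzN, hz⟩
      exact measure_mono_null hsub (measure_union_null ih hstep)
  -- coverage and conclusion
  have cover : ∀ z : ℝ × ℝ, z ∈ (Set.Iio (1 : ℝ)) ×ˢ V → ∃ i, z ∈ Gam b V i := by
    rintro ⟨x, v⟩ ⟨hx1, hv⟩
    have hv0 := hVpos v hv
    refine ⟨⌊-x * b * v⁻¹⌋₊ + 1, mem_Gam hv0 (hVlt v hv) hv hx1 ?_⟩
    rw [iff_lt' hb hv0]
    push_cast
    exact Nat.lt_floor_add_one _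
  have hfinal : μ (N ∩ ((Set.Iio (1 : ℝ)) ×ˢ V)) = 0 := by
    have hsub : N ∩ ((Set.Iio (1 : ℝ)) ×ˢ V) ⊆ ⋃ i, N ∩ Gam b V i := by
      rintro z ⟨hzN, hzS⟩
      obtain ⟨i, hi⟩ := cover z hzS
      exact Set.mem_iUnion.mpr ⟨i, ⟨hzN, hi⟩⟩
    exact measure_mono_null hsub (measure_iUnion_null key)
  rw [ae_iff]
  have hset : {z : ℝ × ℝ | ¬ ftil₁ z = ftil₂ z} = N := rfl
  rw [hset, Measure.restrict_apply hN]
  exact hfinal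
end

section
/- Let f ∈ L¹(Ω,μ) have boundary extension f̃, and let t ≥ 0. Then the function g : Ω → ℝ defined by g(x,v) = f̃(x − tv, v) belongs to L¹(Ω,μ), and the function g̃ : Ω̃ → ℝ defined by g̃(x,v) = f̃(x − tv, v) is a boundary extension of g. -/
open MeasureTheory Set Filter Topology

lemma measurableSet_Omi (b : ℝ) {V : Set ℝ} (hVm : MeasurableSet V) (i : ℕ) :
    MeasurableSet (Omi b V i) := by
  cases i with
  | zero => exact measurableSet_Ioo.prod hVm
  | succ i =>
      have h0 : MeasurableSet {z : ℝ × ℝ | z.2 ∈ V} := measurable_snd hVm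
      have h1 : MeasurableSet {z : ℝ × ℝ | -(((i : ℝ) + 1) * z.2 * b⁻¹) < z.1} :=
        measurableSet_lt (by fun_prop) measurable_fst
      have h2 : MeasurableSet {z : ℝ × ℝ | z.1 ≤ -((i : ℝ) * z.2 * b⁻¹)} :=
        measurableSet_le measurable_fst (by fun_prop)
      exact h0.inter (h1.inter h2)

lemma measurableSet_Gam (b : ℝ) {V : Set ℝ} (hVm : MeasurableSet V) (j : ℕ) :
    MeasurableSet (Gam b V j) :=
  MeasurableSet.biUnion (Finset.range (j + 1)).countable_toSet
    (fun i _ => measurableSet_Omi b hVm i)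

lemma Gam_zero (b : ℝ) (V : Set ℝ) : Gam b V 0 = (Set.Ioo (0 : ℝ) 1) ×ˢ V := by
  ext z
  simp [Gam, Omi, Finset.mem_range, Nat.lt_one_iff]

lemma mem_Gam_elim {a b : ℝ} (ha : 0 ≤ a) (hab : a < b) {V : Set ℝ} (hV : V ⊆ Set.Ioo a b)
    {n : ℕ} {z : ℝ × ℝ} (hz : z ∈ Gam b V n) :
    z.2 ∈ V ∧ -((n : ℝ) * z.2 * b⁻¹) < z.1 ∧ z.1 < 1 := by
  have hb : 0 < b := lt_of_le_of_lt ha hab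
  simp only [Gam, Set.mem_iUnion, Finset.mem_range] at hz
  obtain ⟨i, hi, hzi⟩ := hz
  cases i with
  | zero =>
      obtain ⟨⟨hx0, hx1⟩, hvV⟩ := hzi
      have hv : 0 < z.2 := lt_of_le_of_lt ha (hV hvV).1
      refine ⟨hvV, ?_, hx1⟩
      have : 0 ≤ (n : ℝ) * z.2 * b⁻¹ := by positivity
      linarith
  | succ i =>
      obtain ⟨hvV, hlt, hle⟩ := hzi
      have hv : 0 < z.2 := lt_of_le_of_lt ha (hV hvV).1
      have hin : (i : ℝ) + 1 ≤ (n : ℝ) := by exact_mod_cast Nat.lt_succ_iff.mp hi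
      have h1 : -((n : ℝ) * z.2 * b⁻¹) ≤ -(((i : ℝ) + 1) * z.2 * b⁻¹) := by
        have : ((i : ℝ) + 1) * z.2 * b⁻¹ ≤ (n : ℝ) * z.2 * b⁻¹ := by
          apply mul_le_mul_of_nonneg_right (mul_le_mul_of_nonneg_right hin hv.le)
          positivity
        linarith
      have h2 : (i : ℝ) * z.2 * b⁻¹ ≥ 0 := by positivity
      exact ⟨hvV, lt_of_le_of_lt h1 hlt, by linarith⟩

lemma mem_Gam_intro {a b : ℝ} (ha : 0 ≤ a) (hab : a < b) {V : Set ℝ} (hV : V ⊆ Set.Ioo a b)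
    {n : ℕ} {z : ℝ × ℝ} (hvV : z.2 ∈ V) (hlt : -((n : ℝ) * z.2 * b⁻¹) < z.1) (h1 : z.1 < 1) :
    z ∈ Gam b V n := by
  have hb : 0 < b := lt_of_le_of_lt ha hab
  have hv : 0 < z.2 := lt_of_le_of_lt ha (hV hvV).1
  simp only [Gam, Set.mem_iUnion, Finset.mem_range]
  by_cases hx : 0 < z.1
  · exact ⟨0, Nat.succ_pos n, ⟨⟨hx, h1⟩, hvV⟩⟩
  · push_neg at hx
    set s : ℝ := -z.1 * b / z.2 with hs
    have hs0 : 0 ≤ s := by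
      apply div_nonneg _ hv.le
      nlinarith
    have hsn : s < n := by
      rw [hs, div_lt_iff₀ hv]
      have h2 := mul_lt_mul_of_pos_right hlt hb
      rw [neg_mul, mul_assoc, inv_mul_cancel₀ hb.ne', mul_one] at h2
      linarith
    have hn0 : 0 < n := by
      by_contra h
      push_neg at h
      interval_cases n
      simp at hsn
      linarith
    refine ⟨⌊s⌋₊ + 1, ?_, ?_, ?_, ?_⟩
    · have : ⌊s⌋₊ < n := (Nat.floor_lt hs0).2 hsn
      omega
    · exact hvV
    · -- -((⌊s⌋₊ + 1) * z.2 * b⁻¹) < z.1  ↔  s < ⌊s⌋₊ + 1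
      have h2 : s < (⌊s⌋₊ : ℝ) + 1 := Nat.lt_floor_add_one s
      rw [hs, div_lt_iff₀ hv] at h2
      have hb' : (0:ℝ) < b⁻¹ := inv_pos.mpr hb
      rw [neg_lt]
      calc -z.1 = (-z.1 * b) * b⁻¹ := by field_simp
        _ < (((⌊s⌋₊ : ℝ) + 1) * z.2) * b⁻¹ := by
            apply mul_lt_mul_of_pos_right h2 hb'
        _ = ((⌊s⌋₊ : ℝ) + 1) * z.2 * b⁻¹ := by ring
    · -- z.1 ≤ -(⌊s⌋₊ * z.2 * b⁻¹)  ↔  ⌊s⌋₊ ≤ s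
      have h2 : (⌊s⌋₊ : ℝ) ≤ s := Nat.floor_le hs0
      rw [hs, le_div_iff₀ hv] at h2
      have hb' : (0:ℝ) < b⁻¹ := inv_pos.mpr hb
      rw [le_neg]
      calc (⌊s⌋₊ : ℝ) * z.2 * b⁻¹ = ((⌊s⌋₊ : ℝ) * z.2) * b⁻¹ := by ring
        _ ≤ (-z.1 * b) * b⁻¹ := mul_le_mul_of_nonneg_right h2 hb'.le
        _ = -z.1 := by field_simp

lemma mp_shear (ν : Measure ℝ) [SigmaFinite ν] (t : ℝ) :
    MeasurePreserving (fun z : ℝ × ℝ => (z.1 - t * z.2, z.2))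
      ((volume : Measure ℝ).prod ν) ((volume : Measure ℝ).prod ν) := by
  have h1 : MeasurePreserving Prod.swap ((volume : Measure ℝ).prod ν) (ν.prod volume) :=
    Measure.measurePreserving_swap
  have h2 : MeasurePreserving (fun p : ℝ × ℝ => (p.1, p.2 - t * p.1))
      (ν.prod volume) (ν.prod volume) := by
    have hgm : Measurable (Function.uncurry (fun (p q : ℝ) => q - t * p)) :=
      measurable_snd.sub (measurable_const.mul measurable_fst)
    have hg : ∀ᵐ v ∂ν, Measure.map (fun q : ℝ => q - t * v) volume = volume := by
      refine ae_of_all _ fun v => ?_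
      simpa [sub_eq_add_neg] using map_add_right_eq_self (volume : Measure ℝ) (-(t * v))
    simpa using (MeasurePreserving.id ν).skew_product (g := fun (p q : ℝ) => q - t * p) hgm hg
  have h3 : MeasurePreserving Prod.swap (ν.prod volume) ((volume : Measure ℝ).prod ν) :=
    Measure.measurePreserving_swap
  exact (h3.comp (h2.comp h1) : _)

theorem stmt6
    (a b p q : ℝ) (ha : 0 ≤ a) (hab : a < b)
    (hp : 0 ≤ p) (hq : 0 ≤ q) (hpq : 0 < p + q)
    (V : Set ℝ) (hV : V ⊆ Set.Ioo a b) (hVm : MeasurableSet V)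
    (ν : Measure ℝ) [SigmaFinite ν]
    (k : ℝ → ℝ → ℝ) (hkm : Measurable (Function.uncurry k))
    (hknn : ∀ w v : ℝ, 0 ≤ k w v)
    (hk1 : ∀ w ∈ V, ∫ v in V, k w v ∂ν = 1)
    (f ftil : ℝ × ℝ → ℝ)
    (hf : IntegrableOn f ((Set.Ioo (0 : ℝ) 1) ×ˢ V) ((volume : Measure ℝ).prod ν))
    (hext : IsBoundaryExtension b p q k ν V f ftil)
    (t : ℝ) (ht : 0 ≤ t) :
    IntegrableOn (fun z : ℝ × ℝ => ftil (z.1 - t * z.2, z.2))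
        ((Set.Ioo (0 : ℝ) 1) ×ˢ V) ((volume : Measure ℝ).prod ν) ∧
    IsBoundaryExtension b p q k ν V
      (fun z : ℝ × ℝ => ftil (z.1 - t * z.2, z.2))
      (fun z : ℝ × ℝ => ftil (z.1 - t * z.2, z.2)) := by
  have hb : 0 < b := lt_of_le_of_lt ha hab
  obtain ⟨hm, hint, hpos, hbd⟩ := hext
  set μ : Measure (ℝ × ℝ) := (volume : Measure ℝ).prod ν with hμ
  set T : ℝ × ℝ → ℝ × ℝ := fun z => (z.1 - t * z.2, z.2) with hTdef
  have hT : MeasurePreserving T μ μ := mp_shear ν t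
  set m : ℕ := ⌈t * b⌉₊ with hmdef
  -- T maps Gam j into Gam (j + m)
  have hmaps : ∀ j : ℕ, ∀ z ∈ Gam b V j, T z ∈ Gam b V (j + m) := by
    intro j z hz
    obtain ⟨hvV, hlt, hlt1⟩ := mem_Gam_elim ha hab hV hz
    have hv : 0 < z.2 := lt_of_le_of_lt ha (hV hvV).1
    refine mem_Gam_intro ha hab hV (n := j + m) hvV ?_ ?_
    · show -(((j + m : ℕ) : ℝ) * z.2 * b⁻¹) < z.1 - t * z.2
      have htb : t * b ≤ (m : ℝ) := Nat.le_ceil (t * b)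
      have hinv : (0:ℝ) < b⁻¹ := inv_pos.mpr hb
      have h1 : t * z.2 ≤ (m : ℝ) * z.2 * b⁻¹ := by
        have h2 : t * b * (z.2 * b⁻¹) ≤ (m : ℝ) * (z.2 * b⁻¹) :=
          mul_le_mul_of_nonneg_right htb (by positivity)
        have e : t * z.2 = t * b * (z.2 * b⁻¹) := by field_simp
        rw [e]
        calc t * b * (z.2 * b⁻¹) ≤ (m : ℝ) * (z.2 * b⁻¹) := h2
          _ = (m : ℝ) * z.2 * b⁻¹ := by ring
      push_cast
      nlinarith
    · show z.1 - t * z.2 < 1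
      nlinarith
  -- integrability of the shifted function on each Gam j
  have key : ∀ j : ℕ, IntegrableOn (fun z => ftil (T z)) (Gam b V j) μ := by
    intro j
    have hGj : MeasurableSet (Gam b V (j + m)) := measurableSet_Gam b hVm (j + m)
    have h1 : Integrable ((Gam b V (j + m)).indicator ftil) μ :=
      (integrable_indicator_iff hGj).2 (hint (j + m))
    have h2 : Integrable (((Gam b V (j + m)).indicator ftil) ∘ T) μ :=
      (hT.integrable_comp h1.aestronglyMeasurable).2 h1
    have h3 : ((Gam b V (j + m)).indicator ftil) ∘ T
        = (T ⁻¹' (Gam b V (j + m))).indicator (fun z => ftil (T z)) := by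
      ext z
      by_cases h : T z ∈ Gam b V (j + m) <;>
        simp [Set.indicator, h, Function.comp]
    rw [h3] at h2
    exact ((integrable_indicator_iff (hGj.preimage hT.measurable)).1 h2).mono_set
      (fun z hz => hmaps j z hz)
  have hGam0 : Gam b V 0 = (Set.Ioo (0 : ℝ) 1) ×ˢ V := Gam_zero b V
  constructor
  · have := key 0
    rwa [hGam0] at this
  refine ⟨hm.comp (by fun_prop), fun j => key j, ae_of_all _ fun z _ => rfl, ?_⟩
  -- boundary condition
  set S : Set (ℝ × ℝ) := (Set.Iio (1 : ℝ)) ×ˢ V with hSdef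
  have hS : MeasurableSet S := measurableSet_Iio.prod hVm
  obtain ⟨M, hMsub, hMm, hM0⟩ := exists_measurable_superset_of_null (ae_iff.mp hbd)
  have hM0' : μ (M ∩ S) = 0 := by
    rw [← Measure.restrict_apply' hS]; exact hM0
  have hnull : μ (T ⁻¹' (M ∩ S)) = 0 := by
    rw [hT.measure_preimage (hMm.inter hS).nullMeasurableSet]
    exact hM0'
  have h1 : ∀ᵐ z ∂ μ.restrict S, T z ∉ M ∩ S := by
    rw [ae_iff]
    have : {z : ℝ × ℝ | ¬ T z ∉ M ∩ S} = T ⁻¹' (M ∩ S) := by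
      ext z; simp [Set.mem_preimage]
    rw [this]
    exact le_antisymm ((Measure.restrict_le_self _).trans_eq hnull) zero_le
  filter_upwards [h1, ae_restrict_mem hS] with z hz1 hz2
  intro hx
  have hvV : z.2 ∈ V := hz2.2
  have hv : 0 < z.2 := lt_of_le_of_lt ha (hV hvV).1
  have hTzS : T z ∈ S := by
    constructor
    · show z.1 - t * z.2 < 1
      have : 0 ≤ t * z.2 := mul_nonneg ht hv.le
      linarith
    · exact hvV
  have hPTz : (T z).1 ≤ 0 →
      Integrable (fun w => ftil (1 + (T z).1 * w * (T z).2⁻¹, w)) (ell p q k ν V (T z).2) ∧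
      ftil (T z) = ∫ w, ftil (1 + (T z).1 * w * (T z).2⁻¹, w) ∂(ell p q k ν V (T z).2) := by
    by_contra h
    exact hz1 ⟨hMsub h, hTzS⟩
  have hTx : (T z).1 ≤ 0 := by
    show z.1 - t * z.2 ≤ 0
    have : 0 ≤ t * z.2 := mul_nonneg ht hv.le
    linarith
  obtain ⟨hI, hE⟩ := hPTz hTx
  have harg : (fun w => ftil (1 + (T z).1 * w * (T z).2⁻¹, w))
      = fun w => ftil (1 + z.1 * w * z.2⁻¹ - t * w, w) := by
    funext w
    congr 1
    show (1 + (z.1 - t * z.2) * w * z.2⁻¹, w) = (1 + z.1 * w * z.2⁻¹ - t * w, w)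
    congr 1
    field_simp
    ring
  rw [harg] at hI hE
  exact ⟨hI, hE⟩
end
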